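/- (Soundness, sequence case.) Suppose correspondence is preserved by the rules generated by Φ(S₁, nᵢ, n_k, p, R) and by Φ(S₂, n_k, nⱼ, p, R) (induction hypotheses): whenever an initial operational configuration corresponds to the initial pushdown state, the final operational configuration of S₁ (respectively S₂) corresponds to the final pushdown state of the corresponding pushdown execution. Then correspondence is preserved by Φ(S₁;S₂, nᵢ, nⱼ, p, R): if (μ₀,λ₀) with procedure p topmost corresponds to ⟨ρ₀,θ₀⟩, (μ₀,λ₀,S₁) ⇓ (μ₁',λ₁'), (μ₁',λ₁',S₂) ⇓ (μ₂',λ₂') (rule SEQUENCE), and the pushdown execution from ⟨ρ₀,θ₀⟩ at nᵢ through n_k to nⱼ reaches ⟨ρ',θ'⟩, then (μ₂',λ₂') corresponds to ⟨ρ',θ'⟩. -/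
import Mathlib


/-!
STATEMENT 8 (Soundness, sequence case).  Setup as in the other soundness
cases.  `Op₁`/`Op₂` are the big-step operational relations of S₁ and S₂ on
configurations (μ,λ), and `Pd₁`/`Pd₂` are the execution relations induced
on pushdown states (ρ, η(p)) by the rule sets Φ(S₁,nᵢ,n_k,p,R) and
Φ(S₂,n_k,nⱼ,p,R) (from the entry point to the exit point of each
statement).  `Preserves` expresses the correspondence-preservation
induction hypothesis: whenever an initial operational configuration
corresponds to the initial pushdown state, the final operational
configuration corresponds to the final pushdown state of the corresponding
pushdown execution.

Conclusion: correspondence is preserved by Φ(S₁;S₂,nᵢ,nⱼ,p,R), whose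
operational relation is the composition of Op₁ and Op₂ (rule SEQUENCE) and
whose pushdown execution from nᵢ through n_k to nⱼ is the composition of
Pd₁ and Pd₂.
-/

abbrev Loc := ℕ
abbrev Val := ℤ
abbrev Var := String

/-- Operational configurations: a heap and a stack. -/
abbrev Cfg := (Loc → Option Val) × (Loc → Option Val)

/-- Pushdown states: a global valuation and a valuation of the local
variables of the topmost procedure. -/
abbrev PdState := (Loc → Val) × (Var → Val)

/-- Correspondence between an operational configuration (μ,λ) (with
procedure p topmost) and a pushdown state (ρ, η(p)), relative to the
location/local-variable correspondence `G`. -/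
def Corresponds (G : Loc → Option Var) (c : Cfg) (s : PdState) : Prop :=
  (∀ l, (c.1 l).isSome → c.1 l = some (s.1 l)) ∧
  (∀ l x, (c.2 l).isSome → G l = some x → c.2 l = some (s.2 x))

/-- Correspondence preservation: if the initial operational configuration
corresponds to the initial pushdown state, then the final operational
configuration corresponds to the final pushdown state of the corresponding
pushdown execution. -/
def Preserves (G : Loc → Option Var) (Op : Cfg → Cfg → Prop)
    (Pd : PdState → PdState → Prop) : Prop :=
  ∀ c s c' s', Corresponds G c s → Op c c' → Pd s s' → Corresponds G c' s'

theorem soundness_seq (G : Loc → Option Var)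
    (Op₁ Op₂ : Cfg → Cfg → Prop) (Pd₁ Pd₂ : PdState → PdState → Prop)
    (h₁ : Preserves G Op₁ Pd₁) (h₂ : Preserves G Op₂ Pd₂) :
    Preserves G (Relation.Comp Op₁ Op₂) (Relation.Comp Pd₁ Pd₂) := by
  rintro c s c' s' hc ⟨c₁, o1, o2⟩ ⟨s₁, p1, p2⟩
  exact h₂ c₁ s₁ c' s' (h₁ c s c₁ s₁ hc o1 p1) o2 p2
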